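/- arXiv:1403.4111 — 2 statements merged into one kernel-verified Lean document; each statement's English description precedes it below -/
import Mathlib

section
/- Let f : ℝ≥0 → ℝ be measurable and assume ∫₀^∞ 1/w < ∞. The following are equivalent: (1) the multiplication operator M_f (g ↦ fg) is an everywhere-defined continuous linear operator on H_w; (2) M_f is everywhere defined on H_w (fg ∈ H_w for all g ∈ H_w); (3) f ∈ H_w. Moreover, if f ∈ H_w then the operator norm of M_f is at most √(5+4k²)·‖f‖_w where k² = ∫₀^∞ 1/w. -/
open MeasureTheory Set Filter

noncomputable section

/-- Inner product on the Filipović space `H_w`, for functions `g, h` with chosen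
(weak) derivatives `g', h'`:  `⟨g,h⟩_w = g(0)h(0) + ∫₀^∞ w g' h'`. -/
def wInner (w g g' h h' : ℝ → ℝ) : ℝ :=
  g 0 * h 0 + ∫ x in Ioi (0:ℝ), w x * g' x * h' x

/-- Norm on the Filipović space `H_w`. -/
def wNorm (w g g' : ℝ → ℝ) : ℝ := Real.sqrt (wInner w g g' g g')

/-- `w : ℝ≥0 → [1,∞)` continuous, increasing, with `w 0 = 1`. -/
structure IsWeight (w : ℝ → ℝ) : Prop where
  cont : ContinuousOn w (Ici 0)
  mono : MonotoneOn w (Ici 0)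
  one_le : ∀ x ∈ Ici (0:ℝ), 1 ≤ w x
  at_zero : w 0 = 1

/-- `g ∈ H_w` with derivative `g'`: `g` is absolutely continuous on `[0,∞)` with
a.e. derivative `g'`, and `∫₀^∞ w (g')² < ∞`. -/
def MemHw (w g g' : ℝ → ℝ) : Prop :=
  (∀ x ∈ Ici (0:ℝ), g x = g 0 + ∫ t in Ioc (0:ℝ) x, g' t) ∧
  (∀ x ∈ Ici (0:ℝ), IntegrableOn g' (Ioc 0 x)) ∧
  IntegrableOn (fun x => w x * g' x ^ 2) (Ioi 0)

/-- The reproducing kernel `h_x(y) = 1 + ∫₀^{min(x,y)} 1/w(s) ds`. -/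
def hker (w : ℝ → ℝ) (x y : ℝ) : ℝ := 1 + ∫ s in Ioc (0:ℝ) (min x y), 1 / w s

/-- Derivative of `h_x`. -/
def hker' (w : ℝ → ℝ) (x : ℝ) : ℝ → ℝ := (Iic x).indicator (fun s => 1 / w s)

lemma wpos (w : ℝ → ℝ) (hw : IsWeight w) {t : ℝ} (ht : 0 ≤ t) : 0 < w t :=
  lt_of_lt_of_le one_pos (hw.one_le t ht)

lemma cs_bound (w : ℝ → ℝ) (hw : IsWeight w)
    (hk : IntegrableOn (fun x => 1 / w x) (Ioi 0))
    {g' : ℝ → ℝ} {x : ℝ}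
    (hint : IntegrableOn g' (Ioc 0 x))
    (hsq : IntegrableOn (fun t => w t * g' t ^ 2) (Ioi 0)) :
    ∫ t in Ioc 0 x, |g' t| ≤
      Real.sqrt (∫ s in Ioi (0:ℝ), 1 / w s) * Real.sqrt (∫ s in Ioi (0:ℝ), w s * g' s ^ 2) := by
  set μx := volume.restrict (Ioc (0:ℝ) x) with hμx
  have hmem : ∀ᵐ t ∂μx, t ∈ Ioc (0:ℝ) x := ae_restrict_mem measurableSet_Ioc
  set F : ℝ → ℝ := fun t => Real.sqrt (1 / w t) with hF
  set G : ℝ → ℝ := fun t => Real.sqrt (w t * g' t ^ 2) with hG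
  have hwm : AEMeasurable w μx :=
    ContinuousOn.aemeasurable (hw.cont.mono (Ioc_subset_Icc_self.trans Icc_subset_Ici_self))
      measurableSet_Ioc
  have hFm : AEStronglyMeasurable F μx := by
    have : AEMeasurable (fun t => 1 / w t) μx := by
      simp only [one_div]; exact hwm.inv
    exact (Real.continuous_sqrt.measurable.comp_aemeasurable this).aestronglyMeasurable
  have hGm : AEStronglyMeasurable G μx := by
    have : AEMeasurable (fun t => w t * g' t ^ 2) μx :=
      hwm.mul ((hint.1.aemeasurable).pow aemeasurable_const)
    exact (Real.continuous_sqrt.measurable.comp_aemeasurable this).aestronglyMeasurable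
  have hF2 : Integrable (fun t => F t ^ (2:ℕ)) μx := by
    refine ((hk.mono_set Ioc_subset_Ioi_self).congr ?_)
    filter_upwards [hmem] with t ht
    have hwt := wpos w hw ht.1.le
    have h0 : (0:ℝ) ≤ 1 / w t := div_nonneg zero_le_one hwt.le
    simp only [hF]
    rw [Real.sq_sqrt h0]
  have hG2 : Integrable (fun t => G t ^ (2:ℕ)) μx := by
    refine ((hsq.mono_set Ioc_subset_Ioi_self).congr ?_)
    filter_upwards [hmem] with t ht
    have hwt := wpos w hw ht.1.le
    have h1 : (0:ℝ) ≤ w t * g' t ^ 2 := by positivity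
    simp only [hG]
    rw [Real.sq_sqrt h1]
  have hconj : Real.HolderConjugate 2 2 := by rw [Real.holderConjugate_iff]; norm_num
  have hMF : MemLp F (ENNReal.ofReal 2) μx := by
    rw [show ENNReal.ofReal 2 = 2 by norm_num]
    exact (memLp_two_iff_integrable_sq hFm).2 hF2
  have hMG : MemLp G (ENNReal.ofReal 2) μx := by
    rw [show ENNReal.ofReal 2 = 2 by norm_num]
    exact (memLp_two_iff_integrable_sq hGm).2 hG2
  have key := integral_mul_le_Lp_mul_Lq_of_nonneg hconj
    (Eventually.of_forall fun t => Real.sqrt_nonneg _)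
    (Eventually.of_forall fun t => Real.sqrt_nonneg _) hMF hMG
  -- rewrite LHS of key
  have hLHS : ∫ t, F t * G t ∂μx = ∫ t in Ioc (0:ℝ) x, |g' t| := by
    refine integral_congr_ae ?_
    filter_upwards [hmem] with t ht
    have hwt : 0 < w t := wpos w hw ht.1.le
    rw [hF, hG, ← Real.sqrt_mul (by positivity)]
    rw [show 1 / w t * (w t * g' t ^ 2) = g' t ^ 2 by field_simp]
    exact Real.sqrt_sq_eq_abs _
  have hInt1 : ∫ t, F t ^ (2:ℝ) ∂μx ≤ ∫ s in Ioi (0:ℝ), 1 / w s := by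
    have h1 : ∫ t, F t ^ (2:ℝ) ∂μx = ∫ t in Ioc (0:ℝ) x, 1 / w t := by
      refine integral_congr_ae ?_
      filter_upwards [hmem] with t ht
      have hwt := wpos w hw ht.1.le
      have h0 : (0:ℝ) ≤ 1 / w t := div_nonneg zero_le_one hwt.le
      rw [show (2:ℝ) = ((2:ℕ):ℝ) by norm_num, Real.rpow_natCast]
      simp only [hF]
      rw [Real.sq_sqrt h0]
    rw [h1]
    refine setIntegral_mono_set hk ?_ (HasSubset.Subset.eventuallyLE Ioc_subset_Ioi_self)
    filter_upwards [ae_restrict_mem measurableSet_Ioi] with t ht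
    exact div_nonneg zero_le_one (wpos w hw ht.le).le
  have hInt2 : ∫ t, G t ^ (2:ℝ) ∂μx ≤ ∫ s in Ioi (0:ℝ), w s * g' s ^ 2 := by
    have h1 : ∫ t, G t ^ (2:ℝ) ∂μx = ∫ t in Ioc (0:ℝ) x, w t * g' t ^ 2 := by
      refine integral_congr_ae ?_
      filter_upwards [hmem] with t ht
      have hwt : 0 < w t := wpos w hw ht.1.le
      have h1 : (0:ℝ) ≤ w t * g' t ^ 2 := by positivity
      rw [show (2:ℝ) = ((2:ℕ):ℝ) by norm_num, Real.rpow_natCast]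
      simp only [hG]
      rw [Real.sq_sqrt h1]
    rw [h1]
    refine setIntegral_mono_set hsq ?_ (HasSubset.Subset.eventuallyLE Ioc_subset_Ioi_self)
    filter_upwards [ae_restrict_mem measurableSet_Ioi] with t ht
    have := wpos w hw (le_of_lt ht)
    positivity
  have h2nonneg : (0:ℝ) ≤ ∫ t, F t ^ (2:ℝ) ∂μx := by
    refine integral_nonneg fun t => ?_
    positivity
  have h3nonneg : (0:ℝ) ≤ ∫ t, G t ^ (2:ℝ) ∂μx := by
    refine integral_nonneg fun t => ?_
    positivity
  calc ∫ t in Ioc (0:ℝ) x, |g' t| = ∫ t, F t * G t ∂μx := hLHS.symm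
    _ ≤ (∫ t, F t ^ (2:ℝ) ∂μx) ^ ((1:ℝ)/2) * (∫ t, G t ^ (2:ℝ) ∂μx) ^ ((1:ℝ)/2) := key
    _ = Real.sqrt (∫ t, F t ^ (2:ℝ) ∂μx) * Real.sqrt (∫ t, G t ^ (2:ℝ) ∂μx) := by
        rw [Real.sqrt_eq_rpow, Real.sqrt_eq_rpow]
    _ ≤ Real.sqrt (∫ s in Ioi (0:ℝ), 1 / w s) * Real.sqrt (∫ s in Ioi (0:ℝ), w s * g' s ^ 2) := by
        gcongr <;>
          first
            | exact Real.sqrt_nonneg _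
            | exact Real.sqrt_le_sqrt hInt1
            | exact Real.sqrt_le_sqrt hInt2

lemma wInner_self_eq (w g g' : ℝ → ℝ) :
    wInner w g g' g g' = g 0 ^ 2 + ∫ t in Ioi (0:ℝ), w t * g' t ^ 2 := by
  unfold wInner
  congr 1
  · ring
  · exact integral_congr_ae (Eventually.of_forall fun t => by ring)

lemma wInner_self_nonneg (w : ℝ → ℝ) (hw : IsWeight w) (g g' : ℝ → ℝ) :
    0 ≤ wInner w g g' g g' := by
  rw [wInner_self_eq]
  have : 0 ≤ ∫ t in Ioi (0:ℝ), w t * g' t ^ 2 := by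
    refine setIntegral_nonneg measurableSet_Ioi fun t ht => ?_
    have := wpos w hw (le_of_lt ht); positivity
  positivity

lemma sq_wNorm (w : ℝ → ℝ) (hw : IsWeight w) (g g' : ℝ → ℝ) :
    wNorm w g g' ^ 2 = wInner w g g' g g' :=
  Real.sq_sqrt (wInner_self_nonneg w hw g g')

lemma pointwise_bound (w : ℝ → ℝ) (hw : IsWeight w)
    (hk : IntegrableOn (fun x => 1 / w x) (Ioi 0))
    {g g' : ℝ → ℝ} (hg : MemHw w g g') {x : ℝ} (hx : 0 ≤ x) :
    |g x| ≤ Real.sqrt (1 + ∫ s in Ioi (0:ℝ), 1 / w s) * wNorm w g g' := by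
  set K := ∫ s in Ioi (0:ℝ), 1 / w s with hKdef
  set I := ∫ s in Ioi (0:ℝ), w s * g' s ^ 2 with hIdef
  have hK : 0 ≤ K := by
    refine setIntegral_nonneg measurableSet_Ioi fun t ht => ?_
    exact div_nonneg zero_le_one (wpos w hw (le_of_lt ht)).le
  have hI : 0 ≤ I := by
    refine setIntegral_nonneg measurableSet_Ioi fun t ht => ?_
    have := wpos w hw (le_of_lt ht); positivity
  have hrep := hg.1 x hx
  have habs : |g x| ≤ |g 0| + Real.sqrt K * Real.sqrt I := by
    rw [hrep]
    refine (abs_add_le _ _).trans ?_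
    gcongr
    calc |∫ t in Ioc (0:ℝ) x, g' t| ≤ ∫ t in Ioc (0:ℝ) x, |g' t| := by
          simpa using norm_integral_le_integral_norm (μ := volume.restrict (Ioc (0:ℝ) x)) g'
      _ ≤ Real.sqrt K * Real.sqrt I := cs_bound w hw hk (hg.2.1 x hx) hg.2.2
  have hsq : (|g 0| + Real.sqrt K * Real.sqrt I) ^ 2 ≤ (1 + K) * (g 0 ^ 2 + I) := by
    nlinarith [sq_nonneg (Real.sqrt I - Real.sqrt K * |g 0|), Real.sq_sqrt hK, Real.sq_sqrt hI,
      sq_abs (g 0), Real.sqrt_nonneg K, Real.sqrt_nonneg I, abs_nonneg (g 0)]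
  have h2 : |g 0| + Real.sqrt K * Real.sqrt I ≤ Real.sqrt ((1 + K) * (g 0 ^ 2 + I)) := by
    have := Real.sqrt_le_sqrt hsq
    rwa [Real.sqrt_sq (by positivity)] at this
  have h3 : Real.sqrt ((1 + K) * (g 0 ^ 2 + I)) = Real.sqrt (1 + K) * wNorm w g g' := by
    rw [Real.sqrt_mul (by positivity), wNorm, wInner_self_eq]
  exact habs.trans (h2.trans h3.le)

lemma g_contOn (w : ℝ → ℝ) {g g' : ℝ → ℝ} (hg : MemHw w g g') {x : ℝ} (hx : 0 ≤ x) :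
    ContinuousOn g (Icc 0 x) := by
  have hint : IntegrableOn g' (Icc 0 x) :=
    (hg.2.1 x hx).congr_set_ae (Ioc_ae_eq_Icc (μ := volume)).symm
  have hprim : ContinuousOn (fun t => ∫ s in Ioc (0:ℝ) t, g' s) (Icc 0 x) :=
    intervalIntegral.continuousOn_primitive hint
  have hc : ContinuousOn (fun t => g 0 + ∫ s in Ioc (0:ℝ) t, g' s) (Icc 0 x) :=
    continuousOn_const.add hprim
  exact hc.congr fun t ht => hg.1 t ht.1

lemma g_aesm (w : ℝ → ℝ) {g g' : ℝ → ℝ} (hg : MemHw w g g') {x : ℝ} (hx : 0 ≤ x) :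
    AEStronglyMeasurable g (volume.restrict (Ioc 0 x)) :=
  ((g_contOn w hg hx).mono Ioc_subset_Icc_self).aestronglyMeasurable measurableSet_Ioc

lemma prod_rule (w : ℝ → ℝ) (hw : IsWeight w)
    (hk : IntegrableOn (fun x => 1 / w x) (Ioi 0))
    {f f' g g' : ℝ → ℝ} (hf : MemHw w f f') (hg : MemHw w g g') {x : ℝ} (hx : 0 ≤ x) :
    IntegrableOn (fun t => f' t * g t + f t * g' t) (Ioc 0 x) ∧
    f x * g x = f 0 * g 0 + ∫ t in Ioc (0:ℝ) x, (f' t * g t + f t * g' t) := by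
  set μx := volume.restrict (Ioc (0:ℝ) x) with hμx
  have hmem : ∀ᵐ t ∂μx, t ∈ Ioc (0:ℝ) x := ae_restrict_mem measurableSet_Ioc
  have hfi : IntegrableOn f' (Ioc 0 x) := hf.2.1 x hx
  have hgi : IntegrableOn g' (Ioc 0 x) := hg.2.1 x hx
  have hgm : AEStronglyMeasurable g μx := g_aesm w hg hx
  have hfm : AEStronglyMeasurable f μx := g_aesm w hf hx
  have hgbd : ∀ᵐ t ∂μx, ‖g t‖ ≤ Real.sqrt (1 + ∫ s in Ioi (0:ℝ), 1 / w s) * wNorm w g g' := by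
    filter_upwards [hmem] with t ht
    exact pointwise_bound w hw hk hg ht.1.le
  have hfbd : ∀ᵐ t ∂μx, ‖f t‖ ≤ Real.sqrt (1 + ∫ s in Ioi (0:ℝ), 1 / w s) * wNorm w f f' := by
    filter_upwards [hmem] with t ht
    exact pointwise_bound w hw hk hf ht.1.le
  have h1 : Integrable (fun t => f' t * g t) μx :=
    (hfi.bdd_mul hgm hgbd).congr (Eventually.of_forall fun t => mul_comm _ _)
  have h2 : Integrable (fun t => f t * g' t) μx := hgi.bdd_mul hfm hfbd
  refine ⟨h1.add h2, ?_⟩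
  -- primitives
  set u : ℝ → ℝ := fun t => ∫ s in Ioc (0:ℝ) t, f' s with hu
  set v : ℝ → ℝ := fun t => ∫ s in Ioc (0:ℝ) t, g' s with hv
  set F : ℝ × ℝ → ℝ := fun p => f' p.1 * g' p.2 with hFdef
  have hFint : Integrable F (μx.prod μx) := hfi.mul_prod hgi
  set A : Set (ℝ × ℝ) := {p | p.2 ≤ p.1} with hAdef
  set B : Set (ℝ × ℝ) := {p | p.1 ≤ p.2} with hBdef
  have hA : MeasurableSet A := measurableSet_le measurable_snd measurable_fst
  have hB : MeasurableSet B := measurableSet_le measurable_fst measurable_snd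
  have hT1int : Integrable (A.indicator F) (μx.prod μx) := hFint.indicator hA
  have hT2int : Integrable (B.indicator F) (μx.prod μx) := hFint.indicator hB
  -- inner integral identifications
  have hae1 : (fun s => ∫ t, A.indicator F (s, t) ∂μx) =ᵐ[μx] fun s => f' s * v s := by
    filter_upwards [hmem] with s hs
    have hfun : (fun t => A.indicator F (s, t)) = fun t => f' s * (Iic s).indicator g' t := by
      funext t
      by_cases h : t ≤ s
      · rw [Set.indicator_of_mem (show (s, t) ∈ A from h) F,
          Set.indicator_of_mem (show t ∈ Iic s from h)]
      · rw [Set.indicator_of_notMem (show (s, t) ∉ A from h) F,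
          Set.indicator_of_notMem (show t ∉ Iic s from h), mul_zero]
    have hset : Iic s ∩ Ioc 0 x = Ioc (0:ℝ) s := by
      ext t
      simp only [mem_inter_iff, mem_Iic, mem_Ioc]
      exact ⟨fun ⟨h1', h2', _⟩ => ⟨h2', h1'⟩, fun ⟨h1', h2'⟩ => ⟨h2', h1', h2'.trans hs.2⟩⟩
    rw [hfun, integral_const_mul]
    congr 1
    rw [hμx, integral_indicator measurableSet_Iic, Measure.restrict_restrict measurableSet_Iic,
      hset]
  have hae2 : (fun t => ∫ s, B.indicator F (s, t) ∂μx) =ᵐ[μx] fun t => u t * g' t := by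
    filter_upwards [hmem] with t ht
    have hfun : (fun s => B.indicator F (s, t)) = fun s => (Iic t).indicator f' s * g' t := by
      funext s
      by_cases h : s ≤ t
      · rw [Set.indicator_of_mem (show (s, t) ∈ B from h) F,
          Set.indicator_of_mem (show s ∈ Iic t from h)]
      · rw [Set.indicator_of_notMem (show (s, t) ∉ B from h) F,
          Set.indicator_of_notMem (show s ∉ Iic t from h), zero_mul]
    have hset : Iic t ∩ Ioc 0 x = Ioc (0:ℝ) t := by
      ext s
      simp only [mem_inter_iff, mem_Iic, mem_Ioc]
      exact ⟨fun ⟨h1', h2', _⟩ => ⟨h2', h1'⟩, fun ⟨h1', h2'⟩ => ⟨h2', h1', h2'.trans ht.2⟩⟩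
    rw [hfun, integral_mul_const]
    congr 1
    rw [hμx, integral_indicator measurableSet_Iic, Measure.restrict_restrict measurableSet_Iic,
      hset]
  have hT1 : ∫ p, A.indicator F p ∂(μx.prod μx) = ∫ s, f' s * v s ∂μx := by
    rw [integral_prod _ hT1int]
    exact integral_congr_ae hae1
  have hT2 : ∫ p, B.indicator F p ∂(μx.prod μx) = ∫ t, u t * g' t ∂μx := by
    rw [integral_prod_symm _ hT2int]
    exact integral_congr_ae hae2
  -- integrability of f' * v and u * g'
  have hfv : Integrable (fun s => f' s * v s) μx :=
    (hT1int.integral_prod_left).congr hae1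
  have hug : Integrable (fun t => u t * g' t) μx :=
    (hT2int.integral_prod_right).congr hae2
  -- diagonal is null
  have hD : MeasurableSet {p : ℝ × ℝ | p.1 = p.2} :=
    measurableSet_eq_fun measurable_fst measurable_snd
  have hdiag : (μx.prod μx) {p : ℝ × ℝ | p.1 = p.2} = 0 := by
    rw [Measure.prod_apply hD]
    have : ∀ s : ℝ, μx (Prod.mk s ⁻¹' {p : ℝ × ℝ | p.1 = p.2}) = 0 := by
      intro s
      have : Prod.mk s ⁻¹' {p : ℝ × ℝ | p.1 = p.2} = {s} := by
        ext t; simp [eq_comm]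
      rw [this]
      exact le_antisymm ((Measure.restrict_le_self _).trans_eq (measure_singleton s))
        zero_le
    simp [this]
  have hoffdiag : ∀ᵐ p ∂(μx.prod μx), p.1 ≠ (p.2 : ℝ) := by
    rw [ae_iff]
    convert hdiag using 2
    simp
  have hsplit : (∫ p, A.indicator F p ∂(μx.prod μx)) + (∫ p, B.indicator F p ∂(μx.prod μx))
      = u x * v x := by
    rw [← integral_add hT1int hT2int]
    have : (fun p => A.indicator F p + B.indicator F p) =ᵐ[μx.prod μx] F := by
      filter_upwards [hoffdiag] with p hp
      rcases lt_or_gt_of_ne hp with h | h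
      · rw [Set.indicator_of_notMem (show p ∉ A from not_le.2 h) F,
          Set.indicator_of_mem (show p ∈ B from h.le) F, zero_add]
      · rw [Set.indicator_of_mem (show p ∈ A from h.le) F,
          Set.indicator_of_notMem (show p ∉ B from not_le.2 h) F, add_zero]
    rw [integral_congr_ae this, hFdef]
    exact integral_prod_mul f' g'
  -- split the two integrals
  have hI1 : ∫ t, f' t * g t ∂μx = g 0 * u x + ∫ s, f' s * v s ∂μx := by
    have e : (fun t => f' t * g t) =ᵐ[μx] fun t => g 0 * f' t + f' t * v t := by
      filter_upwards [hmem] with t ht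
      rw [hg.1 t ht.1.le]
      ring
    rw [integral_congr_ae e, integral_add (hfi.const_mul _) hfv, integral_const_mul]
  have hI2 : ∫ t, f t * g' t ∂μx = f 0 * v x + ∫ t, u t * g' t ∂μx := by
    have e : (fun t => f t * g' t) =ᵐ[μx] fun t => f 0 * g' t + u t * g' t := by
      filter_upwards [hmem] with t ht
      rw [hf.1 t ht.1.le]
      ring
    rw [integral_congr_ae e, integral_add (hgi.const_mul _) hug, integral_const_mul]
  have hfinal : ∫ t in Ioc (0:ℝ) x, (f' t * g t + f t * g' t)
      = g 0 * u x + f 0 * v x + u x * v x := by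
    rw [show (∫ t in Ioc (0:ℝ) x, (f' t * g t + f t * g' t)) = ∫ t, (f' t * g t + f t * g' t) ∂μx from rfl,
      integral_add h1 h2, hI1, hI2, ← hsplit, hT1, hT2]
    ring
  rw [hfinal, hf.1 x hx, hg.1 x hx]
  ring

lemma Ioi_eq_iUnion : Ioi (0:ℝ) = ⋃ n : ℕ, Ioc (0:ℝ) (n + 1) := by
  ext t
  simp only [mem_Ioi, mem_iUnion, mem_Ioc]
  constructor
  · intro ht
    obtain ⟨n, hn⟩ := exists_nat_ge t
    exact ⟨n, ht, hn.trans (by linarith)⟩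
  · rintro ⟨n, hn, -⟩
    exact hn

lemma aesm_Ioi_deriv (w : ℝ → ℝ) {g g' : ℝ → ℝ} (hg : MemHw w g g') :
    AEStronglyMeasurable g' (volume.restrict (Ioi 0)) := by
  rw [Ioi_eq_iUnion, aestronglyMeasurable_iUnion_iff]
  intro n
  exact (hg.2.1 ((n:ℝ) + 1) (mem_Ici.mpr (by positivity))).1

lemma aesm_Ioi_self (w : ℝ → ℝ) {g g' : ℝ → ℝ} (hg : MemHw w g g') :
    AEStronglyMeasurable g (volume.restrict (Ioi 0)) := by
  rw [Ioi_eq_iUnion, aestronglyMeasurable_iUnion_iff]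
  intro n
  exact g_aesm w hg (by have := Nat.cast_nonneg (α := ℝ) n; linarith : (0:ℝ) ≤ (n:ℝ) + 1)

lemma mul_mem (w : ℝ → ℝ) (hw : IsWeight w)
    (hk : IntegrableOn (fun x => 1 / w x) (Ioi 0))
    {f f' g g' : ℝ → ℝ} (hf : MemHw w f f') (hg : MemHw w g g') :
    MemHw w (fun x => f x * g x) (fun t => f' t * g t + f t * g' t) ∧
    wNorm w (fun x => f x * g x) (fun t => f' t * g t + f t * g' t) ≤
      Real.sqrt (5 + 4 * ∫ s in Ioi (0:ℝ), 1 / w s) * wNorm w f f' * wNorm w g g' := by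
  set K := ∫ s in Ioi (0:ℝ), 1 / w s with hKdef
  have hK : 0 ≤ K := by
    refine setIntegral_nonneg measurableSet_Ioi fun t ht => ?_
    exact div_nonneg zero_le_one (wpos w hw (le_of_lt ht)).le
  set d : ℝ → ℝ := fun t => f' t * g t + f t * g' t with hd
  set Nf := wNorm w f f' with hNf
  set Ng := wNorm w g g' with hNg
  have hNf0 : 0 ≤ Nf := Real.sqrt_nonneg _
  have hNg0 : 0 ≤ Ng := Real.sqrt_nonneg _
  set If := ∫ s in Ioi (0:ℝ), w s * f' s ^ 2 with hIf
  set Ig := ∫ s in Ioi (0:ℝ), w s * g' s ^ 2 with hIg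
  have hIf0 : 0 ≤ If := by
    refine setIntegral_nonneg measurableSet_Ioi fun t ht => ?_
    have := wpos w hw (le_of_lt ht); positivity
  have hIg0 : 0 ≤ Ig := by
    refine setIntegral_nonneg measurableSet_Ioi fun t ht => ?_
    have := wpos w hw (le_of_lt ht); positivity
  have hNf2 : Nf ^ 2 = f 0 ^ 2 + If := by rw [hNf, sq_wNorm w hw, wInner_self_eq]
  have hNg2 : Ng ^ 2 = g 0 ^ 2 + Ig := by rw [hNg, sq_wNorm w hw, wInner_self_eq]
  -- measurability of d on Ioi 0
  have hwm : AEMeasurable w (volume.restrict (Ioi (0:ℝ))) :=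
    ContinuousOn.aemeasurable (hw.cont.mono (fun t ht => mem_Ici.mpr (le_of_lt ht))) measurableSet_Ioi
  have hdm : AEStronglyMeasurable d (volume.restrict (Ioi (0:ℝ))) := by
    have h1 := (aesm_Ioi_deriv w hf).mul (aesm_Ioi_self w hg)
    have h2 := (aesm_Ioi_self w hf).mul (aesm_Ioi_deriv w hg)
    exact h1.add h2
  have hwd2m : AEStronglyMeasurable (fun t => w t * d t ^ 2) (volume.restrict (Ioi (0:ℝ))) := by
    exact (hwm.mul ((hdm.aemeasurable.pow aemeasurable_const))).aestronglyMeasurable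
  -- pointwise bound
  have hbd : ∀ᵐ t ∂(volume.restrict (Ioi (0:ℝ))),
      ‖w t * d t ^ 2‖ ≤ 2 * ((1 + K) * Ng ^ 2) * (w t * f' t ^ 2)
        + 2 * ((1 + K) * Nf ^ 2) * (w t * g' t ^ 2) := by
    filter_upwards [ae_restrict_mem measurableSet_Ioi] with t ht
    have hwt : 0 < w t := wpos w hw (le_of_lt ht)
    have hft : |f t| ≤ Real.sqrt (1 + K) * Nf := pointwise_bound w hw hk hf (le_of_lt ht)
    have hgt : |g t| ≤ Real.sqrt (1 + K) * Ng := pointwise_bound w hw hk hg (le_of_lt ht)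
    have hsK : Real.sqrt (1 + K) ^ 2 = 1 + K := Real.sq_sqrt (by linarith)
    have hft2 : f t ^ 2 ≤ (1 + K) * Nf ^ 2 := by
      have h1 : |f t| ^ 2 ≤ (Real.sqrt (1 + K) * Nf) ^ 2 := by
        gcongr
      rw [sq_abs] at h1
      calc f t ^ 2 ≤ (Real.sqrt (1 + K) * Nf) ^ 2 := h1
        _ = Real.sqrt (1 + K) ^ 2 * Nf ^ 2 := by ring
        _ = (1 + K) * Nf ^ 2 := by rw [hsK]
    have hgt2 : g t ^ 2 ≤ (1 + K) * Ng ^ 2 := by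
      have h1 : |g t| ^ 2 ≤ (Real.sqrt (1 + K) * Ng) ^ 2 := by
        gcongr
      rw [sq_abs] at h1
      calc g t ^ 2 ≤ (Real.sqrt (1 + K) * Ng) ^ 2 := h1
        _ = Real.sqrt (1 + K) ^ 2 * Ng ^ 2 := by ring
        _ = (1 + K) * Ng ^ 2 := by rw [hsK]
    have hd2 : d t ^ 2 ≤ 2 * ((1 + K) * Ng ^ 2) * f' t ^ 2 + 2 * ((1 + K) * Nf ^ 2) * g' t ^ 2 := by
      have e1 : d t ^ 2 ≤ 2 * (f' t * g t) ^ 2 + 2 * (f t * g' t) ^ 2 := by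
        simp only [hd]; nlinarith [sq_nonneg (f' t * g t - f t * g' t)]
      have e2 : (f' t * g t) ^ 2 ≤ ((1 + K) * Ng ^ 2) * f' t ^ 2 := by
        have : (f' t * g t) ^ 2 = g t ^ 2 * f' t ^ 2 := by ring
        rw [this]
        exact mul_le_mul_of_nonneg_right hgt2 (sq_nonneg _)
      have e3 : (f t * g' t) ^ 2 ≤ ((1 + K) * Nf ^ 2) * g' t ^ 2 := by
        have : (f t * g' t) ^ 2 = f t ^ 2 * g' t ^ 2 := by ring
        rw [this]
        exact mul_le_mul_of_nonneg_right hft2 (sq_nonneg _)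
      linarith
    have hnn : (0:ℝ) ≤ w t * d t ^ 2 := by positivity
    rw [Real.norm_of_nonneg hnn]
    calc w t * d t ^ 2
        ≤ w t * (2 * ((1 + K) * Ng ^ 2) * f' t ^ 2 + 2 * ((1 + K) * Nf ^ 2) * g' t ^ 2) :=
          mul_le_mul_of_nonneg_left hd2 hwt.le
      _ = 2 * ((1 + K) * Ng ^ 2) * (w t * f' t ^ 2) + 2 * ((1 + K) * Nf ^ 2) * (w t * g' t ^ 2) :=
          by ring
  have hbdint : Integrable (fun t => 2 * ((1 + K) * Ng ^ 2) * (w t * f' t ^ 2)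
      + 2 * ((1 + K) * Nf ^ 2) * (w t * g' t ^ 2)) (volume.restrict (Ioi (0:ℝ))) :=
    (hf.2.2.const_mul _).add (hg.2.2.const_mul _)
  have hwd2int : IntegrableOn (fun t => w t * d t ^ 2) (Ioi 0) :=
    Integrable.mono' hbdint hwd2m hbd
  -- MemHw for the product
  have hmem : MemHw w (fun x => f x * g x) d := by
    refine ⟨fun x hx => ?_, fun x hx => (prod_rule w hw hk hf hg hx).1, hwd2int⟩
    exact (prod_rule w hw hk hf hg hx).2
  refine ⟨hmem, ?_⟩
  -- norm bound
  have hIbd : ∫ t in Ioi (0:ℝ), w t * d t ^ 2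
      ≤ 2 * ((1 + K) * Ng ^ 2) * If + 2 * ((1 + K) * Nf ^ 2) * Ig := by
    have := integral_mono_ae hwd2int hbdint ?_
    · calc ∫ t in Ioi (0:ℝ), w t * d t ^ 2
          ≤ ∫ t in Ioi (0:ℝ), (2 * ((1 + K) * Ng ^ 2) * (w t * f' t ^ 2)
            + 2 * ((1 + K) * Nf ^ 2) * (w t * g' t ^ 2)) := this
        _ = 2 * ((1 + K) * Ng ^ 2) * If + 2 * ((1 + K) * Nf ^ 2) * Ig := by
            rw [integral_add (hf.2.2.const_mul _) (hg.2.2.const_mul _),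
              integral_const_mul, integral_const_mul]
    · filter_upwards [hbd, ae_restrict_mem measurableSet_Ioi] with t h1 ht
      have hwt : 0 < w t := wpos w hw (le_of_lt ht)
      have : (0:ℝ) ≤ w t * d t ^ 2 := by positivity
      rwa [Real.norm_of_nonneg this] at h1
  have hInner : wInner w (fun x => f x * g x) d (fun x => f x * g x) d
      = (f 0 * g 0) ^ 2 + ∫ t in Ioi (0:ℝ), w t * d t ^ 2 := by
    exact wInner_self_eq w _ d
  have hIneq : wInner w (fun x => f x * g x) d (fun x => f x * g x) d
      ≤ (5 + 4 * K) * (Nf ^ 2 * Ng ^ 2) := by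
    rw [hInner, hNf2, hNg2, mul_pow]
    rw [hNf2, hNg2] at hIbd
    nlinarith [hIbd, hIf0, hIg0, hK,
      mul_nonneg hIf0 hIg0, mul_nonneg (sq_nonneg (f 0)) hIg0, mul_nonneg (sq_nonneg (g 0)) hIf0,
      mul_nonneg (mul_nonneg hK (sq_nonneg (f 0))) (sq_nonneg (g 0)),
      mul_nonneg (mul_nonneg hK (sq_nonneg (f 0))) hIg0,
      mul_nonneg (mul_nonneg hK (sq_nonneg (g 0))) hIf0,
      mul_nonneg (sq_nonneg (f 0)) (sq_nonneg (g 0))]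
  have := Real.sqrt_le_sqrt hIneq
  rw [wNorm]
  refine this.trans ?_
  rw [Real.sqrt_mul (by linarith), Real.sqrt_mul (sq_nonneg Nf),
    Real.sqrt_sq hNf0, Real.sqrt_sq hNg0, ← mul_assoc]

lemma one_mem (w : ℝ → ℝ) : MemHw w (fun _ => (1:ℝ)) (fun _ => (0:ℝ)) := by
  refine ⟨fun x hx => by simp, fun x hx => ?_, ?_⟩
  · simpa using (integrableOn_zero (ν := volume) (E := ℝ) (s := Ioc 0 x))
  · have : (fun x => w x * (0:ℝ) ^ 2) = fun _ => (0:ℝ) := by funext x; ring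
    rw [this]
    exact integrableOn_zero

theorem stmt8_aux (w : ℝ → ℝ) (hw : IsWeight w)
    (hk : IntegrableOn (fun x => 1 / w x) (Ioi 0))
    (f : ℝ → ℝ) (hf : Measurable f) :
    ((∃ C : ℝ, ∀ g g' : ℝ → ℝ, MemHw w g g' → ∃ d : ℝ → ℝ,
        MemHw w (fun x => f x * g x) d ∧
        wNorm w (fun x => f x * g x) d ≤ C * wNorm w g g') ↔
      (∀ g g' : ℝ → ℝ, MemHw w g g' → ∃ d : ℝ → ℝ, MemHw w (fun x => f x * g x) d)) ∧
    ((∀ g g' : ℝ → ℝ, MemHw w g g' → ∃ d : ℝ → ℝ, MemHw w (fun x => f x * g x) d) ↔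
      ∃ f' : ℝ → ℝ, MemHw w f f') ∧
    (∀ f' : ℝ → ℝ, MemHw w f f' → ∀ g g' : ℝ → ℝ, MemHw w g g' →
      ∃ d : ℝ → ℝ, MemHw w (fun x => f x * g x) d ∧
        wNorm w (fun x => f x * g x) d ≤
          Real.sqrt (5 + 4 * ∫ s in Ioi (0:ℝ), 1 / w s) * wNorm w f f' * wNorm w g g') := by
  have part3 : ∀ f' : ℝ → ℝ, MemHw w f f' → ∀ g g' : ℝ → ℝ, MemHw w g g' →
      ∃ d : ℝ → ℝ, MemHw w (fun x => f x * g x) d ∧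
        wNorm w (fun x => f x * g x) d ≤
          Real.sqrt (5 + 4 * ∫ s in Ioi (0:ℝ), 1 / w s) * wNorm w f f' * wNorm w g g' := by
    intro f' hf' g g' hg
    obtain ⟨hm, hb⟩ := mul_mem w hw hk hf' hg
    exact ⟨_, hm, hb⟩
  have def_to_mem : (∀ g g' : ℝ → ℝ, MemHw w g g' → ∃ d : ℝ → ℝ,
      MemHw w (fun x => f x * g x) d) → ∃ f' : ℝ → ℝ, MemHw w f f' := by
    intro h2
    obtain ⟨d, hd⟩ := h2 (fun _ => (1:ℝ)) (fun _ => (0:ℝ)) (one_mem w)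
    refine ⟨d, ?_⟩
    simpa only [mul_one] using hd
  refine ⟨⟨?_, ?_⟩, ⟨def_to_mem, ?_⟩, part3⟩
  · rintro ⟨C, hC⟩ g g' hg
    obtain ⟨d, hd, -⟩ := hC g g' hg
    exact ⟨d, hd⟩
  · intro h2
    obtain ⟨f', hf'⟩ := def_to_mem h2
    refine ⟨Real.sqrt (5 + 4 * ∫ s in Ioi (0:ℝ), 1 / w s) * wNorm w f f', fun g g' hg => ?_⟩
    obtain ⟨d, hm, hb⟩ := part3 f' hf' g g' hg
    exact ⟨d, hm, by rw [mul_assoc] at hb ⊢; exact hb⟩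
  · rintro ⟨f', hf'⟩ g g' hg
    exact ⟨_, (mul_mem w hw hk hf' hg).1⟩

/-- for measurable `f`, the multiplication operator `M_f : g ↦ fg`
is continuous on `H_w` iff it is everywhere defined iff `f ∈ H_w`; and if
`f ∈ H_w` its operator norm is at most `√(5+4k²)‖f‖_w`. -/
theorem stmt8 (w : ℝ → ℝ) (hw : IsWeight w)
    (hk : IntegrableOn (fun x => 1 / w x) (Ioi 0))
    (f : ℝ → ℝ) (hf : Measurable f) :
    ((∃ C : ℝ, ∀ g g' : ℝ → ℝ, MemHw w g g' → ∃ d : ℝ → ℝ,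
        MemHw w (fun x => f x * g x) d ∧
        wNorm w (fun x => f x * g x) d ≤ C * wNorm w g g') ↔
      (∀ g g' : ℝ → ℝ, MemHw w g g' → ∃ d : ℝ → ℝ, MemHw w (fun x => f x * g x) d)) ∧
    ((∀ g g' : ℝ → ℝ, MemHw w g g' → ∃ d : ℝ → ℝ, MemHw w (fun x => f x * g x) d) ↔
      ∃ f' : ℝ → ℝ, MemHw w f f') ∧
    (∀ f' : ℝ → ℝ, MemHw w f f' → ∀ g g' : ℝ → ℝ, MemHw w g g' →
      ∃ d : ℝ → ℝ, MemHw w (fun x => f x * g x) d ∧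
        wNorm w (fun x => f x * g x) d ≤
          Real.sqrt (5 + 4 * ∫ s in Ioi (0:ℝ), 1 / w s) * wNorm w f f' * wNorm w g g') :=
  stmt8_aux w hw hk f hf
end
end

section
/- An integral operator T on H_w with kernel q (Tf(x) = ∫₀^∞ q(x,y) f'(y) dy) is an everywhere-defined continuous linear operator if and only if: (1) q(x,·)/√w ∈ L²(ℝ≥0) for every x ≥ 0, and (2) for every f ∈ H_w, the function x ↦ ∫₀^∞ q(x,y) f'(y) dy belongs to H_w. -/
open MeasureTheory Set Filter Topology
open scoped ENNReal NNReal

noncomputable section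

lemma inner_L2 {ν : Measure ℝ} (f g : Lp ℝ 2 ν) :
    (inner ℝ f g : ℝ) = ∫ y, (f : ℝ → ℝ) y * (g : ℝ → ℝ) y ∂ν := by
  rw [L2.inner_def]
  simp [RCLike.inner_apply]
  exact integral_congr_ae (Eventually.of_forall fun y => mul_comm _ _)

lemma norm_L2 {ν : Measure ℝ} (f : Lp ℝ 2 ν) :
    ‖f‖ = Real.sqrt (∫ y, (f : ℝ → ℝ) y * (f : ℝ → ℝ) y ∂ν) := by
  rw [← inner_L2, real_inner_self_eq_norm_sq, Real.sqrt_sq (norm_nonneg _)]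

lemma Ioi_eq_iUnion_Ioc : Ioi (0:ℝ) = ⋃ n : ℕ, Ioc (0:ℝ) n := by
  ext y
  simp only [mem_Ioi, mem_iUnion, mem_Ioc]
  constructor
  · intro hy
    obtain ⟨n, hn⟩ := exists_nat_ge y
    exact ⟨n, hy, hn⟩
  · rintro ⟨n, hy, -⟩
    exact hy

lemma aesm_of_loc (g' : ℝ → ℝ) (h : ∀ x ∈ Ici (0:ℝ), IntegrableOn g' (Ioc 0 x)) :
    AEStronglyMeasurable g' (volume.restrict (Ioi (0:ℝ))) := by
  rw [Ioi_eq_iUnion_Ioc, aestronglyMeasurable_iUnion_iff]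
  exact fun n => (h n (by simp [mem_Ici])).aestronglyMeasurable

section helpers

variable {w : ℝ → ℝ}

lemma aemeas_w (hw : IsWeight w) : AEMeasurable w (volume.restrict (Ici (0:ℝ))) :=
  hw.cont.aemeasurable measurableSet_Ici

lemma aemeas_w' (hw : IsWeight w) : AEMeasurable w (volume.restrict (Ioi (0:ℝ))) :=
  (aemeas_w hw).mono_measure (Measure.restrict_mono Ioi_subset_Ici_self le_rfl)

lemma aemeas_s (hw : IsWeight w) :
    AEMeasurable (fun y => Real.sqrt (w y)) (volume.restrict (Ioi (0:ℝ))) :=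
  Real.continuous_sqrt.measurable.comp_aemeasurable (aemeas_w' hw)

lemma s_one_le (hw : IsWeight w) {y : ℝ} (hy : (0:ℝ) ≤ y) : 1 ≤ Real.sqrt (w y) := by
  rw [show (1:ℝ) = Real.sqrt 1 by simp]
  exact Real.sqrt_le_sqrt (hw.one_le y hy)

lemma s_sq (hw : IsWeight w) {y : ℝ} (hy : (0:ℝ) ≤ y) : Real.sqrt (w y) ^ 2 = w y :=
  Real.sq_sqrt (le_trans zero_le_one (hw.one_le y hy))

lemma s_pos (hw : IsWeight w) {y : ℝ} (hy : (0:ℝ) ≤ y) : 0 < Real.sqrt (w y) :=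
  lt_of_lt_of_le one_pos (s_one_le hw hy)

lemma memL2_sf (hw : IsWeight w) {f' : ℝ → ℝ}
    (hloc : ∀ x ∈ Ici (0:ℝ), IntegrableOn f' (Ioc 0 x))
    (hi : IntegrableOn (fun x => w x * f' x ^ 2) (Ioi 0)) :
    MemLp (fun y => Real.sqrt (w y) * f' y) 2 (volume.restrict (Ioi (0:ℝ))) := by
  have hsm : AEStronglyMeasurable (fun y => Real.sqrt (w y) * f' y)
      (volume.restrict (Ioi (0:ℝ))) :=
    ((aemeas_s hw).mul (aesm_of_loc f' hloc).aemeasurable).aestronglyMeasurable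
  refine (memLp_two_iff_integrable_sq hsm).2 (hi.congr ?_)
  filter_upwards [ae_restrict_mem measurableSet_Ioi] with y hy
  rw [mul_pow, s_sq hw (le_of_lt hy)]

lemma restrict_Ioc_eq {x : ℝ} :
    (volume.restrict (Ioi (0:ℝ))).restrict (Ioc (0:ℝ) x) = volume.restrict (Ioc (0:ℝ) x) := by
  rw [Measure.restrict_restrict measurableSet_Ioc, inter_eq_self_of_subset_left Ioc_subset_Ioi_self]

lemma meas_Ioc_lt {x : ℝ} : (volume.restrict (Ioi (0:ℝ))) (Ioc (0:ℝ) x) < ⊤ := by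
  rw [Measure.restrict_apply measurableSet_Ioc]
  exact lt_of_le_of_lt (measure_mono inter_subset_left) measure_Ioc_lt_top

lemma memJ (hw : IsWeight w) {x : ℝ} :
    MemLp ((Ioc (0:ℝ) x).indicator (fun y => 1 / Real.sqrt (w y))) 2
      (volume.restrict (Ioi (0:ℝ))) := by
  constructor
  · exact ((aemeasurable_const.div (aemeas_s hw)).aestronglyMeasurable).indicator
      measurableSet_Ioc
  · refine lt_of_le_of_lt (eLpNorm_mono_ae (g := (Ioc (0:ℝ) x).indicator (fun _ => (1:ℝ))) ?_) ?_
    · filter_upwards [ae_restrict_mem measurableSet_Ioi] with y hy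
      by_cases hmem : y ∈ Ioc (0:ℝ) x
      · rw [indicator_of_mem hmem, indicator_of_mem hmem, Real.norm_eq_abs, Real.norm_eq_abs]
        rw [abs_of_nonneg (by positivity), abs_one]
        rw [div_le_one (s_pos hw (le_of_lt hy))]
        exact s_one_le hw (le_of_lt hy)
      · rw [indicator_of_notMem hmem, indicator_of_notMem hmem]
    · rw [eLpNorm_indicator_const measurableSet_Ioc (by norm_num) (by norm_num)]
      refine ENNReal.mul_lt_top ENNReal.coe_lt_top ?_
      exact ENNReal.rpow_lt_top_of_nonneg (by norm_num) meas_Ioc_lt.ne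

lemma deriv_unique (d₁ d₂ : ℝ → ℝ)
    (h₁ : ∀ x ∈ Ici (0:ℝ), IntegrableOn d₁ (Ioc 0 x))
    (h₂ : ∀ x ∈ Ici (0:ℝ), IntegrableOn d₂ (Ioc 0 x))
    (heq : ∀ x ∈ Ici (0:ℝ), ∫ t in Ioc (0:ℝ) x, d₁ t = ∫ t in Ioc (0:ℝ) x, d₂ t) :
    d₁ =ᵐ[volume.restrict (Ioi (0:ℝ))] d₂ := by
  rw [Ioi_eq_iUnion_Ioc]
  refine (ae_restrict_iUnion_iff _ _).2 fun n => ?_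
  set D : ℝ → ℝ := fun y => d₁ y - d₂ y with hD
  have hn : (n:ℝ) ∈ Ici (0:ℝ) := by simp [mem_Ici]
  have hDint : ∀ x ∈ Ici (0:ℝ), IntegrableOn D (Ioc 0 x) := fun x hx => (h₁ x hx).sub (h₂ x hx)
  set hh : ℝ → ℝ := (Ioc (0:ℝ) n).indicator D with hhh
  have hInt : Integrable hh := (integrable_indicator_iff measurableSet_Ioc).2 (hDint n hn)
  -- interval integrals of D vanish
  have hF : ∀ x : ℝ, 0 ≤ x → ∫ t in (0:ℝ)..x, D t = 0 := by
    intro x hx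
    rw [intervalIntegral.integral_of_le hx]
    rw [integral_sub (h₁ x hx) (h₂ x hx)]
    rw [heq x hx]; ring
  have hIoc : ∀ a b : ℝ, ∫ t in Ioc a b, hh t = 0 := by
    intro a b
    rw [hhh, setIntegral_indicator measurableSet_Ioc, Ioc_inter_Ioc]
    rcases le_or_gt (b ⊓ n) (a ⊔ 0) with hle | hlt
    · rw [Ioc_eq_empty (not_lt.2 hle)]; simp
    · have ha' : (0:ℝ) ≤ a ⊔ 0 := le_sup_right
      have hb' : (0:ℝ) ≤ b ⊓ n := le_trans ha' hlt.le
      have I1 : IntervalIntegrable D volume 0 (a ⊔ 0) :=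
        (intervalIntegrable_iff_integrableOn_Ioc_of_le ha').2 (hDint _ ha')
      have I2 : IntervalIntegrable D volume (a ⊔ 0) (b ⊓ n) :=
        (intervalIntegrable_iff_integrableOn_Ioc_of_le hlt.le).2
          ((hDint _ hb').mono_set (Ioc_subset_Ioc_left ha'))
      have hadd := intervalIntegral.integral_add_adjacent_intervals I1 I2
      rw [hF _ ha', hF _ hb'] at hadd
      rw [← intervalIntegral.integral_of_le hlt.le]
      linarith
  -- Lebesgue differentiation
  have hae : ∀ᵐ x ∂(volume : Measure ℝ), hh x = 0 := by
    filter_upwards [IsUnifLocDoublingMeasure.ae_tendsto_average (μ := (volume : Measure ℝ))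
      hInt.locallyIntegrable 1] with x hx
    have hδ : Tendsto (fun j : ℕ => (1:ℝ)/(j+1)) atTop (nhdsWithin 0 (Ioi 0)) := by
      apply tendsto_nhdsWithin_of_tendsto_nhds_of_eventually_within
      · exact tendsto_one_div_add_atTop_nhds_zero_nat
      · filter_upwards with j using by simp only [mem_Ioi]; positivity
    have hmem : ∀ᶠ j : ℕ in atTop, x ∈ Metric.closedBall x (1 * ((1:ℝ)/(j+1))) := by
      filter_upwards with j
      simp only [Metric.mem_closedBall, dist_self, one_mul]
      positivity
    have htend := hx (fun _ => x) (fun j : ℕ => (1:ℝ)/(j+1)) hδ hmem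
    have hzero : ∀ j : ℕ, (⨍ y in Metric.closedBall x ((1:ℝ)/(j+1)), hh y) = 0 := by
      intro j
      rw [setAverage_eq, Real.closedBall_eq_Icc, integral_Icc_eq_integral_Ioc, hIoc]
      simp
    rw [show (fun j : ℕ => ⨍ y in Metric.closedBall x ((1:ℝ)/(j+1)), hh y) = fun _ => (0:ℝ)
      from funext hzero] at htend
    exact (tendsto_nhds_unique tendsto_const_nhds htend).symm
  filter_upwards [ae_restrict_of_ae hae, ae_restrict_mem measurableSet_Ioc] with y h1 h2
  have : D y = 0 := by rwa [hhh, indicator_of_mem h2] at h1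
  rw [hD] at this
  simp only at this
  linarith

section moreHelpers
variable {w : ℝ → ℝ}

/-- Cauchy–Schwarz: `∫₀ˣ |d| ≤ √x · √(∫ w d²)`. -/
lemma cs_abs (hw : IsWeight w) {d : ℝ → ℝ}
    (hloc : ∀ x ∈ Ici (0:ℝ), IntegrableOn d (Ioc 0 x))
    (hi : IntegrableOn (fun t => w t * d t ^ 2) (Ioi 0)) {x : ℝ} (hx : 0 ≤ x) :
    ∫ t in Ioc (0:ℝ) x, |d t| ≤
      Real.sqrt x * Real.sqrt (∫ t in Ioi (0:ℝ), w t * d t ^ 2) := by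
  set μ := volume.restrict (Ioi (0:ℝ))
  have hlocabs : ∀ x ∈ Ici (0:ℝ), IntegrableOn (fun t => |d t|) (Ioc 0 x) :=
    fun x hx => (hloc x hx).abs
  have hiabs : IntegrableOn (fun t => w t * |d t| ^ 2) (Ioi 0) :=
    hi.congr (Eventually.of_forall fun y => by simp [sq_abs])
  have m2 : MemLp (fun y => Real.sqrt (w y) * |d y|) 2 μ := memL2_sf hw hlocabs hiabs
  have mJ : MemLp ((Ioc (0:ℝ) x).indicator (fun y => 1 / Real.sqrt (w y))) 2 μ := memJ hw
  set J := mJ.toLp _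
  set A := m2.toLp _
  have key1 : ∫ t in Ioc (0:ℝ) x, |d t| = (inner ℝ J A : ℝ) := by
    rw [inner_L2]
    have h1 : ∫ y, (J : ℝ → ℝ) y * (A : ℝ → ℝ) y ∂μ
        = ∫ y, ((Ioc (0:ℝ) x).indicator (fun t => |d t|)) y ∂μ := by
      refine integral_congr_ae ?_
      filter_upwards [mJ.coeFn_toLp, m2.coeFn_toLp, ae_restrict_mem measurableSet_Ioi]
        with y h1 h2 hy
      rw [h1, h2]
      by_cases hmem : y ∈ Ioc (0:ℝ) x
      · rw [indicator_of_mem hmem, indicator_of_mem hmem]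
        rw [one_div, inv_mul_eq_div, mul_comm, mul_div_assoc,
          div_self (s_pos hw (le_of_lt hy)).ne', mul_one]
      · rw [indicator_of_notMem hmem, indicator_of_notMem hmem, zero_mul]
    rw [h1, integral_indicator measurableSet_Ioc, restrict_Ioc_eq]
  have key2 : (inner ℝ J A : ℝ) ≤ ‖J‖ * ‖A‖ := real_inner_le_norm J A
  have hJ : ‖J‖ ≤ Real.sqrt x := by
    rw [norm_L2]
    refine Real.sqrt_le_sqrt ?_
    have hint1 : Integrable (fun y => (J : ℝ → ℝ) y * (J : ℝ → ℝ) y) μ :=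
      ((Lp.memLp J).integrable_sq).congr (Eventually.of_forall fun y => by ring)
    have hint2 : Integrable ((Ioc (0:ℝ) x).indicator (fun _ => (1:ℝ))) μ :=
      (integrable_indicator_iff measurableSet_Ioc).2
        (integrableOn_const (μ := μ) meas_Ioc_lt.ne)
    have hmono : ∫ y, (J : ℝ → ℝ) y * (J : ℝ → ℝ) y ∂μ
        ≤ ∫ y, ((Ioc (0:ℝ) x).indicator (fun _ => (1:ℝ))) y ∂μ := by
      refine integral_mono_ae hint1 hint2 ?_
      filter_upwards [mJ.coeFn_toLp, ae_restrict_mem measurableSet_Ioi] with y h1 hy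
      rw [h1]
      by_cases hmem : y ∈ Ioc (0:ℝ) x
      · rw [indicator_of_mem hmem, indicator_of_mem hmem]
        have h01 : 0 < Real.sqrt (w y) := s_pos hw (le_of_lt hy)
        have hle : 1 / Real.sqrt (w y) ≤ 1 := by
          rw [div_le_one h01]; exact s_one_le hw (le_of_lt hy)
        have hge : 0 ≤ 1 / Real.sqrt (w y) := by positivity
        nlinarith
      · rw [indicator_of_notMem hmem, indicator_of_notMem hmem, zero_mul]
    refine hmono.trans ?_
    rw [integral_indicator_const _ measurableSet_Ioc]
    rw [measureReal_def, Measure.restrict_apply measurableSet_Ioc,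
      inter_eq_self_of_subset_left Ioc_subset_Ioi_self, Real.volume_Ioc, smul_eq_mul, mul_one]
    rw [ENNReal.toReal_ofReal_eq_iff.2 (by linarith)]
    linarith
  have hA : ‖A‖ = Real.sqrt (∫ t in Ioi (0:ℝ), w t * d t ^ 2) := by
    rw [norm_L2]
    congr 1
    refine integral_congr_ae ?_
    filter_upwards [m2.coeFn_toLp, ae_restrict_mem measurableSet_Ioi] with y h2 hy
    rw [h2, show Real.sqrt (w y) * |d y| * (Real.sqrt (w y) * |d y|)
      = Real.sqrt (w y) ^ 2 * |d y| ^ 2 by ring, s_sq hw (le_of_lt hy), sq_abs]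
  have hsqI : (0:ℝ) ≤ Real.sqrt (∫ t in Ioi (0:ℝ), w t * d t ^ 2) := Real.sqrt_nonneg _
  calc ∫ t in Ioc (0:ℝ) x, |d t| = (inner ℝ J A : ℝ) := key1
    _ ≤ ‖J‖ * ‖A‖ := key2
    _ ≤ Real.sqrt x * Real.sqrt (∫ t in Ioi (0:ℝ), w t * d t ^ 2) := by
        rw [hA]; exact mul_le_mul_of_nonneg_right hJ hsqI

lemma wInner_self (w g g' : ℝ → ℝ) :
    wInner w g g' g g' = g 0 ^ 2 + ∫ x in Ioi (0:ℝ), w x * g' x ^ 2 := by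
  rw [wInner, sq]
  congr 1
  exact integral_congr_ae (Eventually.of_forall fun y => by ring)

lemma int_wsq_nonneg (hw : IsWeight w) (g' : ℝ → ℝ) :
    0 ≤ ∫ x in Ioi (0:ℝ), w x * g' x ^ 2 := by
  refine integral_nonneg_of_ae ?_
  filter_upwards [ae_restrict_mem measurableSet_Ioi] with y hy
  have h1 : (1:ℝ) ≤ w y := hw.one_le y (mem_Ici.2 (le_of_lt hy))
  positivity

/-- Pointwise evaluation bound: `|g x| ≤ (1 + √x)·‖g‖_w`. -/
lemma eval_bound (hw : IsWeight w) {g d : ℝ → ℝ} (hmem : MemHw w g d)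
    {x : ℝ} (hx : 0 ≤ x) : |g x| ≤ (1 + Real.sqrt x) * wNorm w g d := by
  set I := ∫ t in Ioi (0:ℝ), w t * d t ^ 2 with hI
  have hInn : wNorm w g d = Real.sqrt (g 0 ^ 2 + I) := by rw [wNorm, wInner_self]
  have hI0 : 0 ≤ I := int_wsq_nonneg hw d
  have h0 : |g 0| ≤ Real.sqrt (g 0 ^ 2 + I) := by
    rw [← Real.sqrt_sq_eq_abs]
    exact Real.sqrt_le_sqrt (by linarith)
  have hIle : Real.sqrt I ≤ Real.sqrt (g 0 ^ 2 + I) := Real.sqrt_le_sqrt (by nlinarith [sq_nonneg (g 0)])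
  have habs : |∫ t in Ioc (0:ℝ) x, d t| ≤ Real.sqrt x * Real.sqrt I := by
    refine le_trans ?_ (cs_abs hw hmem.2.1 hmem.2.2 hx)
    have := norm_integral_le_integral_norm (μ := volume.restrict (Ioc (0:ℝ) x)) d
    simpa [Real.norm_eq_abs] using this
  rw [hmem.1 x hx, hInn]
  have hsx : 0 ≤ Real.sqrt x := Real.sqrt_nonneg _
  have hN : 0 ≤ Real.sqrt (g 0 ^ 2 + I) := Real.sqrt_nonneg _
  calc |g 0 + ∫ t in Ioc (0:ℝ) x, d t| ≤ |g 0| + |∫ t in Ioc (0:ℝ) x, d t| := abs_add_le _ _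
    _ ≤ Real.sqrt (g 0 ^ 2 + I) + Real.sqrt x * Real.sqrt (g 0 ^ 2 + I) := by
        refine add_le_add h0 (habs.trans ?_)
        exact mul_le_mul_of_nonneg_left hIle hsx
    _ = (1 + Real.sqrt x) * Real.sqrt (g 0 ^ 2 + I) := by ring

/-- The canonical element of `H_w` built from `u ∈ L²`. -/
lemma memHw_div (hw : IsWeight w) (u : ℝ → ℝ)
    (hu : MemLp u 2 (volume.restrict (Ioi (0:ℝ)))) :
    MemHw w (fun x => ∫ t in Ioc (0:ℝ) x, (u t / Real.sqrt (w t)))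
      (fun t => u t / Real.sqrt (w t)) := by
  have hloc : ∀ x ∈ Ici (0:ℝ), IntegrableOn (fun t => u t / Real.sqrt (w t)) (Ioc 0 x) := by
    intro x hx
    haveI : IsFiniteMeasure (volume.restrict (Ioc (0:ℝ) x)) :=
      ⟨by rw [Measure.restrict_apply_univ]; exact measure_Ioc_lt_top⟩
    have hures : MemLp u 2 (volume.restrict (Ioc (0:ℝ) x)) :=
      hu.mono_measure (by rw [← restrict_Ioc_eq]; exact Measure.restrict_le_self)
    have huint : Integrable u (volume.restrict (Ioc (0:ℝ) x)) := hures.integrable one_le_two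
    refine huint.abs.mono' ?_ ?_
    · refine (hures.aestronglyMeasurable.aemeasurable.div ?_).aestronglyMeasurable
      exact (aemeas_s hw).mono_measure (by rw [← restrict_Ioc_eq]; exact Measure.restrict_le_self)
    · filter_upwards [ae_restrict_mem measurableSet_Ioc] with y hy
      rw [Real.norm_eq_abs, abs_div, abs_of_pos (s_pos hw (le_of_lt hy.1))]
      exact div_le_self (abs_nonneg _) (s_one_le hw (le_of_lt hy.1))
  refine ⟨?_, hloc, ?_⟩
  · intro x hx
    simp [Ioc_self]
  · refine hu.integrable_sq.congr ?_
    filter_upwards [ae_restrict_mem measurableSet_Ioi] with y hy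
    have hpos : 0 < w y := lt_of_lt_of_le one_pos (hw.one_le y (mem_Ici.2 (le_of_lt hy)))
    rw [div_pow, s_sq hw (le_of_lt hy)]
    field_simp

lemma forward_L2 (hw : IsWeight w) (q : ℝ → ℝ → ℝ) (hq : Measurable (Function.uncurry q))
    (C : ℝ) (hC : ∀ f f' : ℝ → ℝ, MemHw w f f' →
      (∀ x ∈ Ici (0:ℝ),
        Integrable (fun y => q x y * f' y) (volume.restrict (Ioi (0:ℝ)))) ∧
      ∃ d : ℝ → ℝ, MemHw w (fun x => ∫ y in Ioi (0:ℝ), q x y * f' y) d ∧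
        wNorm w (fun x => ∫ y in Ioi (0:ℝ), q x y * f' y) d ≤ C * wNorm w f f') :
    ∀ x ∈ Ici (0:ℝ),
      MemLp (fun y => q x y / Real.sqrt (w y)) 2 (volume.restrict (Ioi (0:ℝ))) := by
  set μ := volume.restrict (Ioi (0:ℝ)) with hμ
  -- a measurable version of `w`
  obtain ⟨w', hw'meas, hw'one, hww'⟩ :
      ∃ w' : ℝ → ℝ, Measurable w' ∧ (∀ y, 1 ≤ w' y) ∧ w' =ᵐ[volume.restrict (Ici (0:ℝ))] w := by
    obtain ⟨v, hv, hveq⟩ := aemeas_w hw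
    refine ⟨fun y => max (v y) 1, hv.max measurable_const, fun y => le_max_right _ _, ?_⟩
    filter_upwards [hveq, ae_restrict_mem measurableSet_Ici] with y h1 h2
    rw [← h1] at *
    exact max_eq_left (by rw [h1]; exact hw.one_le y h2)
  have hww'μ : w' =ᵐ[μ] w :=
    hww'.filter_mono (ae_mono (Measure.restrict_mono Ioi_subset_Ici_self le_rfl))
  intro x hx
  have hk : Measurable (q x) := hq.of_uncurry_left
  have haesm : AEStronglyMeasurable (fun y => q x y / Real.sqrt (w y)) μ :=
    (hk.aemeasurable.div (aemeas_s hw)).aestronglyMeasurable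
  -- sign function
  set e : ℝ → ℝ := fun y => if 0 ≤ q x y then 1 else -1 with he_def
  have he_meas : Measurable e :=
    Measurable.ite (measurableSet_le measurable_const hk) measurable_const measurable_const
  have he_mul : ∀ y, q x y * e y = |q x y| := by
    intro y
    by_cases h : 0 ≤ q x y
    · simp [he_def, h, abs_of_nonneg h]
    · simp [he_def, h, abs_of_neg (lt_of_not_ge h)]
  have he_abs : ∀ y, |e y| = 1 := by
    intro y
    by_cases h : 0 ≤ q x y <;> simp [he_def, h]
  set K : ℝ := (1 + Real.sqrt x) * max C 0 with hK_def
  have hK0 : 0 ≤ K := by positivity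
  -- truncations
  set m : ℕ → ℝ → ℝ := fun n y => min (|q x y| / w' y) (n:ℝ) with hm_def
  set g : ℕ → ℝ → ℝ := fun n => (Ioc (0:ℝ) (n:ℝ)).indicator (fun y => e y * m n y) with hg_def
  have hw'pos : ∀ y, (0:ℝ) < w' y := fun y => lt_of_lt_of_le one_pos (hw'one y)
  have hm_nonneg : ∀ n y, 0 ≤ m n y := fun n y => le_min (div_nonneg (abs_nonneg _) (le_of_lt (hw'pos y))) (Nat.cast_nonneg n)
  have hm_le : ∀ n y, m n y ≤ (n:ℝ) := fun n y => min_le_right _ _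
  have hg_meas : ∀ n, Measurable (g n) := fun n =>
    (he_meas.mul ((hk.abs.div hw'meas).min measurable_const)).indicator measurableSet_Ioc
  have hg_bdd : ∀ n y, |g n y| ≤ (n:ℝ) := by
    intro n y
    by_cases h : y ∈ Ioc (0:ℝ) (n:ℝ)
    · simp only [hg_def, indicator_of_mem h]
      rw [abs_mul, he_abs, one_mul, abs_of_nonneg (hm_nonneg n y)]
      exact hm_le n y
    · simp only [hg_def, indicator_of_notMem h, abs_zero]
      exact Nat.cast_nonneg n
  have hkg : ∀ n y, q x y * g n y =
      (Ioc (0:ℝ) (n:ℝ)).indicator (fun y => |q x y| * m n y) y := by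
    intro n y
    by_cases h : y ∈ Ioc (0:ℝ) (n:ℝ)
    · simp only [hg_def, indicator_of_mem h]
      rw [← mul_assoc, he_mul]
    · simp only [hg_def, indicator_of_notMem h, mul_zero]
  -- membership in H_w
  have hMem : ∀ n : ℕ, MemHw w (fun x' => ∫ t in Ioc (0:ℝ) x', g n t) (g n) := by
    intro n
    refine ⟨fun x' hx' => by simp [Ioc_self], fun x' hx' => ?_, ?_⟩
    · haveI : IsFiniteMeasure (volume.restrict (Ioc (0:ℝ) x')) :=
        ⟨by rw [Measure.restrict_apply_univ]; exact measure_Ioc_lt_top⟩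
      refine (integrable_const (n:ℝ)).mono' (hg_meas n).aestronglyMeasurable ?_
      exact Eventually.of_forall fun y => by rw [Real.norm_eq_abs]; exact hg_bdd n y
    · have hbd : Integrable ((Ioc (0:ℝ) (n:ℝ)).indicator (fun _ => w n * (n:ℝ)^2)) μ :=
        (integrable_indicator_iff measurableSet_Ioc).2
          (integrableOn_const (μ := μ) meas_Ioc_lt.ne)
      refine hbd.mono' ?_ ?_
      · exact ((aemeas_w' hw).mul ((hg_meas n).pow_const 2).aemeasurable).aestronglyMeasurable
      · filter_upwards [ae_restrict_mem measurableSet_Ioi] with y hy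
        by_cases h : y ∈ Ioc (0:ℝ) (n:ℝ)
        · rw [indicator_of_mem h, Real.norm_eq_abs]
          have h1 : (1:ℝ) ≤ w y := hw.one_le y (mem_Ici.2 (le_of_lt hy))
          have h2 : w y ≤ w n :=
            hw.mono (mem_Ici.2 (le_of_lt hy)) (mem_Ici.2 (Nat.cast_nonneg n)) h.2
          have h3 := hg_bdd n y
          have h4 : g n y ^ 2 ≤ (n:ℝ)^2 := by
            nlinarith [abs_nonneg (g n y), neg_abs_le (g n y), le_abs_self (g n y)]
          rw [abs_of_nonneg (by nlinarith [sq_nonneg (g n y)])]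
          nlinarith [sq_nonneg (g n y)]
        · rw [indicator_of_notMem h]
          simp only [hg_def, indicator_of_notMem h]
          simp
  -- the key bound Aₙ ≤ K²
  have hAK : ∀ n : ℕ, ∫ y in Ioi (0:ℝ), w' y * g n y ^ 2 ≤ K ^ 2 := by
    intro n
    obtain ⟨hInt, dn, hdn, hbound⟩ := hC _ _ (hMem n)
    set A : ℝ := ∫ y in Ioi (0:ℝ), q x y * g n y with hA_def
    set B : ℝ := ∫ y in Ioi (0:ℝ), w y * g n y ^ 2 with hB_def
    have hB' : ∫ y in Ioi (0:ℝ), w' y * g n y ^ 2 = B := by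
      refine integral_congr_ae ?_
      filter_upwards [hww'μ] with y h1
      rw [h1]
    have hA_nonneg : 0 ≤ A := by
      refine integral_nonneg_of_ae (Eventually.of_forall fun y => ?_)
      simp only [Pi.zero_apply]
      rw [hkg n y]
      by_cases h : y ∈ Ioc (0:ℝ) (n:ℝ)
      · rw [indicator_of_mem h]
        exact mul_nonneg (abs_nonneg _) (hm_nonneg n y)
      · rw [indicator_of_notMem h]
    have hBA : B ≤ A := by
      refine integral_mono_ae (hMem n).2.2 (hInt x hx) ?_
      filter_upwards [hww'μ] with y h1
      rw [hkg n y, ← h1]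
      by_cases h : y ∈ Ioc (0:ℝ) (n:ℝ)
      · rw [indicator_of_mem h]
        simp only [hg_def, indicator_of_mem h]
        have he2 : e y ^ 2 = 1 := by
          rcases abs_eq (zero_le_one) |>.1 (he_abs y) with h' | h' <;> rw [h'] <;> ring
        have hmin : w' y * m n y ≤ |q x y| := by
          simp only [hm_def]
          calc w' y * min (|q x y| / w' y) (n:ℝ) ≤ w' y * (|q x y| / w' y) :=
                mul_le_mul_of_nonneg_left (min_le_left _ _) (le_of_lt (hw'pos y))
            _ = |q x y| := by rw [mul_div_assoc']; exact mul_div_cancel_left₀ _ (hw'pos y).ne'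
        calc w' y * (e y * m n y) ^ 2 = (w' y * m n y) * m n y * (e y ^ 2) := by ring
          _ = (w' y * m n y) * m n y := by rw [he2, mul_one]
          _ ≤ |q x y| * m n y := mul_le_mul_of_nonneg_right hmin (hm_nonneg n y)
      · rw [indicator_of_notMem h]
        simp only [hg_def, indicator_of_notMem h]
        simp
    have hB_nonneg : 0 ≤ B := int_wsq_nonneg hw (g n)
    have hwn : wNorm w (fun x' => ∫ t in Ioc (0:ℝ) x', g n t) (g n) = Real.sqrt B := by
      rw [wNorm, wInner_self]
      simp [Ioc_self]
      rfl
    have hAle : A ≤ K * Real.sqrt B := by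
      have h1 := eval_bound hw hdn hx
      have h2 : wNorm w (fun x' => ∫ y in Ioi (0:ℝ), q x' y * g n y) dn
          ≤ max C 0 * Real.sqrt B := by
        refine hbound.trans ?_
        rw [hwn]
        exact mul_le_mul_of_nonneg_right (le_max_left _ _) (Real.sqrt_nonneg _)
      have h3 : (0:ℝ) ≤ 1 + Real.sqrt x := by positivity
      calc A ≤ |(fun x' => ∫ y in Ioi (0:ℝ), q x' y * g n y) x| := le_abs_self _
        _ ≤ (1 + Real.sqrt x) * wNorm w (fun x' => ∫ y in Ioi (0:ℝ), q x' y * g n y) dn := h1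
        _ ≤ (1 + Real.sqrt x) * (max C 0 * Real.sqrt B) := mul_le_mul_of_nonneg_left h2 h3
        _ = K * Real.sqrt B := by rw [hK_def]; ring
    rw [hB']
    have hsB : Real.sqrt B * Real.sqrt B = B := Real.mul_self_sqrt hB_nonneg
    nlinarith [Real.sqrt_nonneg B, hBA, hAle, hsB]
  -- conclude via monotone convergence
  set s' : ℝ → ℝ := fun y => Real.sqrt (w' y) with hs'_def
  have hs'_meas : Measurable s' := Real.continuous_sqrt.measurable.comp hw'meas
  set S : ℕ → Set ℝ := fun n => Ioc (0:ℝ) (n:ℝ) ∩ {y | |q x y| ≤ (n:ℝ) * w' y} with hS_def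
  have hS_meas : ∀ n, MeasurableSet (S n) :=
    fun n => measurableSet_Ioc.inter (measurableSet_le hk.abs (measurable_const.mul hw'meas))
  set F : ℕ → ℝ → ℝ≥0∞ :=
    fun n => (S n).indicator (fun y => ENNReal.ofReal ((q x y / s' y) ^ 2)) with hF_def
  have hF_meas : ∀ n, Measurable (F n) := fun n =>
    (ENNReal.measurable_ofReal.comp ((hk.div hs'_meas).pow_const 2)).indicator (hS_meas n)
  have hS_mono : Monotone S := by
    refine monotone_nat_of_le_succ fun n y hy => ?_
    refine ⟨Ioc_subset_Ioc_right (by exact_mod_cast Nat.le_succ n) hy.1, ?_⟩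
    have h0 : (0:ℝ) ≤ w' y := le_trans zero_le_one (hw'one y)
    have hcast : ((n:ℝ)) ≤ (((n+1 : ℕ)):ℝ) := by exact_mod_cast Nat.le_succ n
    exact le_trans hy.2 (mul_le_mul_of_nonneg_right hcast h0)
  have hF_mono : Monotone F := fun a b hab y =>
    Set.indicator_le_indicator_of_subset (hS_mono hab) (fun _ => zero_le) y
  have hFle : ∀ n, ∫⁻ y, F n y ∂μ ≤ ENNReal.ofReal (K ^ 2) := by
    intro n
    have hint : Integrable (fun y => w' y * g n y ^ 2) μ := by
      refine ((hMem n).2.2).congr ?_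
      filter_upwards [hww'μ] with y h1
      rw [h1]
    have hnn : 0 ≤ᵐ[μ] fun y => w' y * g n y ^ 2 :=
      Eventually.of_forall fun y =>
        mul_nonneg (le_trans zero_le_one (hw'one y)) (sq_nonneg _)
    have hpoint : ∀ y, F n y ≤ ENNReal.ofReal (w' y * g n y ^ 2) := by
      intro y
      by_cases h : y ∈ S n
      · have h1 : m n y = |q x y| / w' y := by
          simp only [hm_def]
          exact min_eq_left ((div_le_iff₀ (hw'pos y)).2 h.2)
        have he2 : e y ^ 2 = 1 := by
          rcases abs_eq (zero_le_one) |>.1 (he_abs y) with h' | h' <;> rw [h'] <;> ring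
        have heq : (q x y / s' y) ^ 2 = w' y * g n y ^ 2 := by
          simp only [hg_def, indicator_of_mem h.1]
          rw [h1, hs'_def]
          rw [div_pow, Real.sq_sqrt (le_trans zero_le_one (hw'one y))]
          rw [mul_pow, he2, one_mul, div_pow, sq_abs]
          have h0 : w' y ≠ 0 := (hw'pos y).ne'
          field_simp
        simp only [hF_def, indicator_of_mem h]
        rw [heq]
      · simp only [hF_def, indicator_of_notMem h]
        exact zero_le
    calc ∫⁻ y, F n y ∂μ ≤ ∫⁻ y, ENNReal.ofReal (w' y * g n y ^ 2) ∂μ := lintegral_mono hpoint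
      _ = ENNReal.ofReal (∫ y in Ioi (0:ℝ), w' y * g n y ^ 2) :=
          (ofReal_integral_eq_lintegral_ofReal hint hnn).symm
      _ ≤ ENNReal.ofReal (K ^ 2) := ENNReal.ofReal_le_ofReal (hAK n)
  have hsup : ∀ᵐ y ∂μ, (⨆ n, F n y) = ENNReal.ofReal ((q x y / Real.sqrt (w y)) ^ 2) := by
    filter_upwards [ae_restrict_mem measurableSet_Ioi, hww'μ] with y hy h1
    have hs_eq : Real.sqrt (w y) = s' y := by rw [hs'_def]; simp only; rw [h1]
    rw [hs_eq]
    refine le_antisymm (iSup_le fun n => ?_) ?_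
    · by_cases h : y ∈ S n
      · simp only [hF_def, indicator_of_mem h]
        exact le_refl _
      · simp only [hF_def, indicator_of_notMem h]
        exact zero_le
    · obtain ⟨n1, hn1⟩ := exists_nat_ge y
      obtain ⟨n2, hn2⟩ := exists_nat_ge |q x y|
      have hyS : y ∈ S (max n1 n2) := by
        refine ⟨⟨hy, le_trans hn1 (by exact_mod_cast le_max_left n1 n2)⟩, ?_⟩
        have h2 : |q x y| ≤ ((max n1 n2 : ℕ):ℝ) :=
          le_trans hn2 (by exact_mod_cast le_max_right n1 n2)
        have h3 : ((max n1 n2 : ℕ):ℝ) ≤ ((max n1 n2 : ℕ):ℝ) * w' y :=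
          le_mul_of_one_le_right (Nat.cast_nonneg _) (hw'one y)
        exact le_trans h2 h3
      refine le_trans ?_ (le_iSup _ (max n1 n2))
      simp only [hF_def, indicator_of_mem hyS]
      exact le_refl _
  refine (memLp_two_iff_integrable_sq haesm).2 ?_
  refine ⟨(haesm.aemeasurable.pow_const 2).aestronglyMeasurable, ?_⟩
  rw [hasFiniteIntegral_iff_norm]
  have hkey : ∫⁻ y, ENNReal.ofReal ((q x y / Real.sqrt (w y)) ^ 2) ∂μ ≤ ENNReal.ofReal (K ^ 2) := by
    rw [← lintegral_congr_ae hsup, lintegral_iSup hF_meas hF_mono]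
    exact iSup_le hFle
  have hnorm : ∀ y, ENNReal.ofReal ‖(q x y / Real.sqrt (w y)) ^ 2‖
      = ENNReal.ofReal ((q x y / Real.sqrt (w y)) ^ 2) := by
    intro y
    rw [Real.norm_eq_abs, abs_of_nonneg (sq_nonneg _)]
  calc ∫⁻ y, ENNReal.ofReal ‖(q x y / Real.sqrt (w y)) ^ 2‖ ∂μ
      = ∫⁻ y, ENNReal.ofReal ((q x y / Real.sqrt (w y)) ^ 2) ∂μ :=
        lintegral_congr fun y => hnorm y
    _ ≤ ENNReal.ofReal (K ^ 2) := hkey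
    _ < ⊤ := ENNReal.ofReal_lt_top

lemma arith_step (a uU k c nu f0 I : ℝ) (h1 : |a| ≤ k * nu) (h2 : uU ≤ c * nu)
    (h3 : 0 ≤ uU) (h4 : 0 ≤ k) (h5 : 0 ≤ c) (h6 : 0 ≤ nu) (h7 : nu^2 = I)
    (h8 : 0 ≤ f0^2) : a^2 + uU^2 ≤ (k^2 + c^2) * (f0^2 + I) := by
  nlinarith [sq_abs a, mul_le_mul h1 h1 (abs_nonneg a) (by positivity),
    mul_le_mul h2 h2 h3 (by positivity)]

set_option maxHeartbeats 1000000 in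
lemma converse_bound (hw : IsWeight w) (q : ℝ → ℝ → ℝ)
    (hQ1 : ∀ x ∈ Ici (0:ℝ),
      MemLp (fun y => q x y / Real.sqrt (w y)) 2 (volume.restrict (Ioi (0:ℝ))))
    (hQ2 : ∀ f f' : ℝ → ℝ, MemHw w f f' →
      (∀ x ∈ Ici (0:ℝ),
        Integrable (fun y => q x y * f' y) (volume.restrict (Ioi (0:ℝ)))) ∧
      ∃ d : ℝ → ℝ, MemHw w (fun x => ∫ y in Ioi (0:ℝ), q x y * f' y) d) :
    ∃ C : ℝ, ∀ f f' : ℝ → ℝ, MemHw w f f' →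
      (∀ x ∈ Ici (0:ℝ),
        Integrable (fun y => q x y * f' y) (volume.restrict (Ioi (0:ℝ)))) ∧
      ∃ d : ℝ → ℝ, MemHw w (fun x => ∫ y in Ioi (0:ℝ), q x y * f' y) d ∧
        wNorm w (fun x => ∫ y in Ioi (0:ℝ), q x y * f' y) d ≤ C * wNorm w f f' := by
  set μ := volume.restrict (Ioi (0:ℝ)) with hμ
  have h0 : (0:ℝ) ∈ Ici (0:ℝ) := mem_Ici.2 le_rfl
  choose hInt d hd using hQ2
  -- basic constructions
  set fp : Lp ℝ 2 μ → ℝ → ℝ := fun u t => (u : ℝ → ℝ) t / Real.sqrt (w t) with hfp_def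
  have hmem : ∀ u : Lp ℝ 2 μ, MemHw w (fun x => ∫ t in Ioc (0:ℝ) x, fp u t) (fp u) :=
    fun u => memHw_div hw _ (Lp.memLp u)
  set T : Lp ℝ 2 μ → ℝ → ℝ := fun u x => ∫ y in Ioi (0:ℝ), q x y * fp u y with hT_def
  set D : Lp ℝ 2 μ → ℝ → ℝ := fun u => d _ _ (hmem u) with hD_def
  have hTd : ∀ u : Lp ℝ 2 μ, MemHw w (T u) (D u) := fun u => hd _ _ (hmem u)
  have hDloc : ∀ u : Lp ℝ 2 μ, ∀ x ∈ Ici (0:ℝ), IntegrableOn (D u) (Ioc 0 x) := fun u => (hTd u).2.1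
  have mSD : ∀ u : Lp ℝ 2 μ, MemLp (fun y => Real.sqrt (w y) * D u y) 2 μ :=
    fun u => memL2_sf hw (hDloc u) (hTd u).2.2
  set U : Lp ℝ 2 μ → Lp ℝ 2 μ := fun u => (mSD u).toLp _ with hU_def
  -- inner-product representations
  have hK : ∀ (x : ℝ) (hx : x ∈ Ici (0:ℝ)) (u : Lp ℝ 2 μ),
      T u x = (inner ℝ ((hQ1 x hx).toLp _) u : ℝ) := by
    intro x hx u
    rw [inner_L2]
    refine (integral_congr_ae ?_).symm
    filter_upwards [(hQ1 x hx).coeFn_toLp, ae_restrict_mem measurableSet_Ioi] with y h1 hy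
    rw [h1, div_mul_eq_mul_div, mul_div_assoc]
  have hj : ∀ (v : Lp ℝ 2 μ) (x : ℝ),
      (inner ℝ v ((memJ hw (x := x)).toLp _) : ℝ)
        = ∫ t in Ioc (0:ℝ) x, ((v : ℝ → ℝ) t / Real.sqrt (w t)) := by
    intro v x
    rw [inner_L2]
    have h1 : ∫ y, (v : ℝ → ℝ) y * ((memJ hw (x := x)).toLp _ : ℝ → ℝ) y ∂μ
        = ∫ y, ((Ioc (0:ℝ) x).indicator
            (fun t => (v : ℝ → ℝ) t / Real.sqrt (w t))) y ∂μ := by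
      refine integral_congr_ae ?_
      filter_upwards [(memJ hw (x := x)).coeFn_toLp, ae_restrict_mem measurableSet_Ioi]
        with y hy1 hy2
      rw [hy1]
      by_cases h : y ∈ Ioc (0:ℝ) x
      · rw [indicator_of_mem h, indicator_of_mem h, mul_one_div]
      · rw [indicator_of_notMem h, indicator_of_notMem h, mul_zero]
    rw [h1, integral_indicator measurableSet_Ioc, restrict_Ioc_eq]
  have hjU : ∀ (u : Lp ℝ 2 μ) (x : ℝ) (hx : x ∈ Ici (0:ℝ)),
      (inner ℝ (U u) ((memJ hw (x := x)).toLp _) : ℝ) = ∫ t in Ioc (0:ℝ) x, D u t := by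
    intro u x hx
    rw [hj]
    refine integral_congr_ae ?_
    have haeμ : (U u : ℝ → ℝ) =ᵐ[volume.restrict (Ioc (0:ℝ) x)]
        fun y => Real.sqrt (w y) * D u y := by
      refine ((mSD u).coeFn_toLp).filter_mono (ae_mono ?_)
      rw [← restrict_Ioc_eq]
      exact Measure.restrict_le_self
    filter_upwards [haeμ, ae_restrict_mem measurableSet_Ioc] with t h1 h2
    rw [h1, mul_comm, mul_div_assoc, div_self (s_pos hw (le_of_lt h2.1)).ne', mul_one]
  have hFTC : ∀ (u : Lp ℝ 2 μ) (x : ℝ) (hx : x ∈ Ici (0:ℝ)),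
      ∫ t in Ioc (0:ℝ) x, D u t = T u x - T u 0 := by
    intro u x hx
    have h := (hTd u).1 x hx
    linarith
  have hD_ae : ∀ (u : Lp ℝ 2 μ) (d' : ℝ → ℝ),
      (∀ x ∈ Ici (0:ℝ), IntegrableOn d' (Ioc 0 x)) →
      (∀ x ∈ Ici (0:ℝ), ∫ t in Ioc (0:ℝ) x, d' t = T u x - T u 0) →
      D u =ᵐ[μ] d' := by
    intro u d' hl he
    exact deriv_unique _ _ (hDloc u) hl (fun x hx => by rw [hFTC u x hx, he x hx])
  -- linearity
  have hadd : ∀ u v : Lp ℝ 2 μ, U (u + v) = U u + U v := by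
    intro u v
    have h1 : fp (u + v) =ᵐ[μ] fun t => fp u t + fp v t := by
      filter_upwards [Lp.coeFn_add u v] with t ht
      simp only [hfp_def, ht, Pi.add_apply, add_div]
    have hTadd : ∀ x ∈ Ici (0:ℝ), T (u + v) x = T u x + T v x := by
      intro x hx
      have e1 : T (u + v) x = ∫ y in Ioi (0:ℝ), (q x y * fp u y + q x y * fp v y) := by
        refine integral_congr_ae ?_
        filter_upwards [h1] with y hy
        rw [hy, mul_add]
      rw [e1, integral_add (hInt _ _ (hmem u) x hx) (hInt _ _ (hmem v) x hx)]
    have hDe : D (u + v) =ᵐ[μ] fun t => D u t + D v t := by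
      refine hD_ae (u + v) _ (fun x hx => (hDloc u x hx).add (hDloc v x hx)) ?_
      intro x hx
      rw [integral_add (hDloc u x hx) (hDloc v x hx), hFTC u x hx, hFTC v x hx,
        hTadd x hx, hTadd 0 h0]
      ring
    refine Lp.ext ?_
    filter_upwards [(mSD (u + v)).coeFn_toLp, Lp.coeFn_add (U u) (U v),
      (mSD u).coeFn_toLp, (mSD v).coeFn_toLp, hDe] with t h1 h2 h3 h4 h5
    rw [h1, h2, h5]
    simp only [Pi.add_apply]
    rw [h3, h4, mul_add]
  have hsmul : ∀ (c : ℝ) (u : Lp ℝ 2 μ), U (c • u) = c • U u := by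
    intro c u
    have h1 : fp (c • u) =ᵐ[μ] fun t => c * fp u t := by
      filter_upwards [Lp.coeFn_smul c u] with t ht
      simp only [hfp_def, ht, Pi.smul_apply, smul_eq_mul, mul_div_assoc]
    have hTs : ∀ x ∈ Ici (0:ℝ), T (c • u) x = c * T u x := by
      intro x hx
      have e1 : T (c • u) x = ∫ y in Ioi (0:ℝ), c * (q x y * fp u y) := by
        refine integral_congr_ae ?_
        filter_upwards [h1] with y hy
        rw [hy]
        ring
      have h2 := integral_smul (μ := volume.restrict (Ioi (0:ℝ))) c (fun y => q x y * fp u y)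
      simp only [smul_eq_mul] at h2
      rw [e1, h2]
    have hDe : D (c • u) =ᵐ[μ] fun t => c * D u t := by
      refine hD_ae (c • u) _ (fun x hx => (hDloc u x hx).const_mul c) ?_
      intro x hx
      have h2 := integral_smul (μ := volume.restrict (Ioc (0:ℝ) x)) c (D u)
      simp only [smul_eq_mul] at h2
      rw [h2, hFTC u x hx, hTs x hx, hTs 0 h0]
      ring
    refine Lp.ext ?_
    filter_upwards [(mSD (c • u)).coeFn_toLp, Lp.coeFn_smul c (U u),
      (mSD u).coeFn_toLp, hDe] with t h1 h2 h3 h5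
    rw [h1, h2, h5]
    simp only [Pi.smul_apply, smul_eq_mul]
    rw [h3]
    ring
  set Ulin : Lp ℝ 2 μ →ₗ[ℝ] Lp ℝ 2 μ :=
    { toFun := U, map_add' := hadd, map_smul' := hsmul } with hUlin_def
  -- closed graph
  have hcont : Continuous Ulin := by
    refine Ulin.continuous_of_seq_closed_graph ?_
    intro ul x0 y0 hu hU
    have key : ∀ t, t ∈ Ici (0:ℝ) →
        (inner ℝ y0 ((memJ hw (x := t)).toLp _) : ℝ)
          = (inner ℝ (Ulin x0) ((memJ hw (x := t)).toLp _) : ℝ) := by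
      intro t ht
      have e1 : ∀ z : Lp ℝ 2 μ, (inner ℝ (Ulin z) ((memJ hw (x := t)).toLp _) : ℝ)
          = (inner ℝ ((hQ1 t ht).toLp _) z : ℝ) - (inner ℝ ((hQ1 0 h0).toLp _) z : ℝ) := by
        intro z
        have : Ulin z = U z := rfl
        rw [this, hjU z t ht, hFTC z t ht, hK t ht z, hK 0 h0 z]
      have lim1 : Tendsto (fun n => (inner ℝ (Ulin (ul n)) ((memJ hw (x := t)).toLp _) : ℝ))
          atTop (𝓝 (inner ℝ y0 ((memJ hw (x := t)).toLp _))) :=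
        Tendsto.inner (𝕜 := ℝ) hU tendsto_const_nhds
      have lim2 : Tendsto (fun n => (inner ℝ (Ulin (ul n)) ((memJ hw (x := t)).toLp _) : ℝ))
          atTop (𝓝 ((inner ℝ ((hQ1 t ht).toLp _) x0 : ℝ) - (inner ℝ ((hQ1 0 h0).toLp _) x0 : ℝ))) := by
        have := (Tendsto.inner (𝕜 := ℝ) (tendsto_const_nhds (x := ((hQ1 t ht).toLp _))) hu).sub
          (Tendsto.inner (𝕜 := ℝ) (tendsto_const_nhds (x := ((hQ1 0 h0).toLp _))) hu)
        refine this.congr fun n => ?_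
        rw [← e1 (ul n)]
      rw [tendsto_nhds_unique lim1 lim2, e1 x0]
    symm
    have hz : ∀ t ∈ Ici (0:ℝ),
        ∫ s in Ioc (0:ℝ) t, ((Ulin x0 - y0 : Lp ℝ 2 μ) : ℝ → ℝ) s / Real.sqrt (w s) = 0 := by
      intro t ht
      rw [← hj (Ulin x0 - y0) t, inner_sub_left, key t ht]
      ring
    have hloc := (memHw_div hw _ (Lp.memLp (Ulin x0 - y0))).2.1
    have hae0 : (fun s => ((Ulin x0 - y0 : Lp ℝ 2 μ) : ℝ → ℝ) s / Real.sqrt (w s))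
        =ᵐ[μ] (fun _ => (0:ℝ)) := by
      refine deriv_unique _ _ hloc (fun x hx => integrableOn_zero) ?_
      intro x hx
      rw [hz x hx]
      simp
    have hg0 : ((Ulin x0 - y0 : Lp ℝ 2 μ) : ℝ → ℝ) =ᵐ[μ] 0 := by
      filter_upwards [hae0, ae_restrict_mem measurableSet_Ioi] with s h1 h2
      have hs := (s_pos hw (le_of_lt h2)).ne'
      simpa [div_eq_zero_iff, hs] using h1
    have : Ulin x0 - y0 = 0 := Lp.ext (hg0.trans (Lp.coeFn_zero ℝ 2 μ).symm)
    rw [sub_eq_zero] at this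
    exact this
  set Ucl : Lp ℝ 2 μ →L[ℝ] Lp ℝ 2 μ := ⟨Ulin, hcont⟩ with hUcl_def
  set k0 : Lp ℝ 2 μ := (hQ1 0 h0).toLp _ with hk0_def
  refine ⟨Real.sqrt (‖k0‖^2 + ‖Ucl‖^2), ?_⟩
  intro f f' hf
  refine ⟨hInt f f' hf, ?_⟩
  have hsm : MemLp (fun y => Real.sqrt (w y) * f' y) 2 μ := memL2_sf hw hf.2.1 hf.2.2
  set u : Lp ℝ 2 μ := hsm.toLp _ with hu_def
  have hfp : fp u =ᵐ[μ] f' := by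
    filter_upwards [hsm.coeFn_toLp, ae_restrict_mem measurableSet_Ioi] with y h1 hy
    show (u : ℝ → ℝ) y / Real.sqrt (w y) = f' y
    rw [h1, mul_comm, mul_div_assoc, div_self (s_pos hw (le_of_lt hy)).ne', mul_one]
  have hTeq : (fun x => ∫ y in Ioi (0:ℝ), q x y * f' y) = T u := by
    funext x
    refine integral_congr_ae ?_
    filter_upwards [hfp] with y h1
    rw [h1]
  rw [hTeq]
  refine ⟨D u, hTd u, ?_⟩
  have hDU : ∫ t in Ioi (0:ℝ), w t * D u t ^ 2 = ‖U u‖^2 := by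
    rw [← real_inner_self_eq_norm_sq, inner_L2]
    refine integral_congr_ae ?_
    filter_upwards [(mSD u).coeFn_toLp, ae_restrict_mem measurableSet_Ioi] with t h1 ht
    rw [h1, show (Real.sqrt (w t) * D u t) * (Real.sqrt (w t) * D u t)
      = Real.sqrt (w t)^2 * (D u t)^2 by ring, s_sq hw (le_of_lt ht)]
  have hu2 : ‖u‖^2 = ∫ t in Ioi (0:ℝ), w t * f' t ^ 2 := by
    rw [← real_inner_self_eq_norm_sq, inner_L2]
    refine integral_congr_ae ?_
    filter_upwards [hsm.coeFn_toLp, ae_restrict_mem measurableSet_Ioi] with t h1 ht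
    rw [h1, show (Real.sqrt (w t) * f' t) * (Real.sqrt (w t) * f' t)
      = Real.sqrt (w t)^2 * (f' t)^2 by ring, s_sq hw (le_of_lt ht)]
  have hT0 : |T u 0| ≤ ‖k0‖ * ‖u‖ := by
    rw [hK 0 h0 u]
    exact abs_real_inner_le_norm _ _
  have hUu : ‖U u‖ ≤ ‖Ucl‖ * ‖u‖ := by
    have h1 : U u = Ucl u := rfl
    rw [h1]
    exact Ucl.le_opNorm u
  have hwn1 : wNorm w (T u) (D u)
      = Real.sqrt ((T u 0)^2 + ∫ t in Ioi (0:ℝ), w t * D u t ^2) := by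
    rw [wNorm, wInner_self]
  have hwn2 : wNorm w f f' = Real.sqrt (f 0 ^2 + ∫ t in Ioi (0:ℝ), w t * f' t ^2) := by
    rw [wNorm, wInner_self]
  rw [hwn1, hwn2, hDU]
  have hIf : (0:ℝ) ≤ ∫ t in Ioi (0:ℝ), w t * f' t ^2 := int_wsq_nonneg hw f'
  have hN2 : (0:ℝ) ≤ ‖k0‖^2 + ‖Ucl‖^2 := by positivity
  have step1 : (T u 0)^2 + ‖U u‖^2
      ≤ (‖k0‖^2 + ‖Ucl‖^2) * (f 0 ^2 + ∫ t in Ioi (0:ℝ), w t * f' t ^2) :=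
    arith_step _ _ _ _ _ _ _ hT0 hUu (norm_nonneg _) (norm_nonneg _) (norm_nonneg _)
      (norm_nonneg _) hu2 (sq_nonneg _)
  calc Real.sqrt ((T u 0)^2 + ‖U u‖^2)
      ≤ Real.sqrt ((‖k0‖^2 + ‖Ucl‖^2) * (f 0 ^2 + ∫ t in Ioi (0:ℝ), w t * f' t ^2)) :=
        Real.sqrt_le_sqrt step1
    _ = Real.sqrt (‖k0‖^2 + ‖Ucl‖^2)
        * Real.sqrt (f 0 ^2 + ∫ t in Ioi (0:ℝ), w t * f' t ^2) := Real.sqrt_mul hN2 _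

end moreHelpers

/-- the integral operator `Tf(x) = ∫₀^∞ q(x,y) f'(y) dy` is an
everywhere-defined continuous (bounded) linear operator on `H_w` if and only if
(1) `q(x,·)/√w ∈ L²(ℝ≥0)` for every `x ≥ 0`, and (2) for every `f ∈ H_w` the
function `x ↦ ∫₀^∞ q(x,y) f'(y) dy` belongs to `H_w`. -/
theorem stmt12 (w : ℝ → ℝ) (hw : IsWeight w)
    (q : ℝ → ℝ → ℝ) (hq : Measurable (Function.uncurry q)) :
    (∃ C : ℝ, ∀ f f' : ℝ → ℝ, MemHw w f f' →
      (∀ x ∈ Ici (0:ℝ),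
        Integrable (fun y => q x y * f' y) (volume.restrict (Ioi (0:ℝ)))) ∧
      ∃ d : ℝ → ℝ, MemHw w (fun x => ∫ y in Ioi (0:ℝ), q x y * f' y) d ∧
        wNorm w (fun x => ∫ y in Ioi (0:ℝ), q x y * f' y) d ≤ C * wNorm w f f') ↔
    ((∀ x ∈ Ici (0:ℝ),
        MemLp (fun y => q x y / Real.sqrt (w y)) 2 (volume.restrict (Ioi (0:ℝ)))) ∧
     (∀ f f' : ℝ → ℝ, MemHw w f f' →
      (∀ x ∈ Ici (0:ℝ),
        Integrable (fun y => q x y * f' y) (volume.restrict (Ioi (0:ℝ)))) ∧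
      ∃ d : ℝ → ℝ, MemHw w (fun x => ∫ y in Ioi (0:ℝ), q x y * f' y) d)) := by
  constructor
  · rintro ⟨C, hC⟩
    exact ⟨forward_L2 hw q hq C hC,
      fun f f' hf => ⟨(hC f f' hf).1, (hC f f' hf).2.imp fun d hd => hd.1⟩⟩
  · rintro ⟨h1, h2⟩
    exact converse_bound hw q h1 h2
end helpers
end
end
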